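/- Let ξ = α+β with α = Ω·α̃ a multiple of Ω and β < Ω, and let β' < β. If Θ*(ξ) > 0, then Θ_X(α+β') ≤ Θ*(ξ). -/

import Mathlib

open Ordinal Set

noncomputable section
open scoped Classical

/-- `Ω`, the first uncountable ordinal. -/
def OmegaO : Ordinal := (Cardinal.aleph 1).ord

/-- `ε_{Ω+1}`, the least `ε > Ω` with `ω ^ ε = ε`. -/
def epsOmega : Ordinal := nfp (fun a => Ordinal.omega0 ^ a) (OmegaO + 1)

lemma omega0_le_OmegaO : Ordinal.omega0 ≤ OmegaO := by
  rw [OmegaO, ← Cardinal.ord_aleph0]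
  exact Cardinal.ord_le_ord.2 (Cardinal.aleph0_le_aleph 1)

lemma one_lt_OmegaO : 1 < OmegaO :=
  lt_of_lt_of_le Ordinal.one_lt_omega0 omega0_le_OmegaO

lemma OmegaO_pos : 0 < OmegaO := lt_trans zero_lt_one one_lt_OmegaO

/-- `ξ*`, the maximal coefficient in the `Ω`-normal form of `ξ`. -/
def star (ξ : Ordinal) : Ordinal :=
  if h0 : ξ = 0 then 0
  else if hl : log OmegaO ξ < ξ then
    max (max (star (log OmegaO ξ)) (star (ξ % OmegaO ^ log OmegaO ξ)))
      (ξ / OmegaO ^ log OmegaO ξ)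
  else 0
termination_by ξ
decreasing_by
  · exact hl
  · exact mod_opow_log_lt_self _ h0

/-- The generalized fundamental sequence `ξ[θ]`. -/
def fs (ξ θ : Ordinal) : Ordinal :=
  if h0 : ξ ≤ 1 then 0
  else if hmod : ξ % OmegaO ^ log OmegaO ξ ≠ 0 then
    OmegaO ^ log OmegaO ξ * (ξ / OmegaO ^ log OmegaO ξ) + fs (ξ % OmegaO ^ log OmegaO ξ) θ
  else if Order.IsSuccLimit (ξ / OmegaO ^ log OmegaO ξ) then OmegaO ^ log OmegaO ξ * θ
  else if hβ : ξ / OmegaO ^ log OmegaO ξ = 1 then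
    (if hlog : Order.IsSuccLimit (log OmegaO ξ) then
       (if hll : log OmegaO ξ < ξ then OmegaO ^ fs (log OmegaO ξ) θ else 0)
     else OmegaO ^ Ordinal.pred (log OmegaO ξ) * θ)
  else
    OmegaO ^ log OmegaO ξ * Ordinal.pred (ξ / OmegaO ^ log OmegaO ξ) + fs (OmegaO ^ log OmegaO ξ) θ
termination_by ξ
decreasing_by
  · exact mod_opow_log_lt_self _ (by intro h; exact h0 (by simp [h]))
  · exact hll
  · -- `Ω ^ log Ω ξ < ξ`
    have hξ0 : ξ ≠ 0 := by intro h; exact h0 (by simp [h])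
    have hle : OmegaO ^ log OmegaO ξ ≤ ξ := opow_log_le_self _ hξ0
    have hpos : 0 < OmegaO ^ log OmegaO ξ :=
      opow_pos _ OmegaO_pos
    have hβ0 : 0 < ξ / OmegaO ^ log OmegaO ξ :=
      Ordinal.div_pos (by positivity) |>.2 hle
    have hβ1 : 1 < ξ / OmegaO ^ log OmegaO ξ :=
      lt_of_le_of_ne (Ordinal.one_le_iff_ne_zero.2 hβ0.ne') (Ne.symm hβ)
    calc OmegaO ^ log OmegaO ξ = OmegaO ^ log OmegaO ξ * 1 := (mul_one _).symm
      _ < OmegaO ^ log OmegaO ξ * (ξ / OmegaO ^ log OmegaO ξ) := by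
          exact mul_lt_mul_of_pos_left hβ1 hpos
      _ ≤ ξ := Ordinal.mul_div_le _ _

/-- The terminal part `τ(ξ)`. -/
def tau (ξ : Ordinal) : Ordinal :=
  if h0 : ξ = 0 then 0
  else if hmod : ξ % OmegaO ^ log OmegaO ξ ≠ 0 then tau (ξ % OmegaO ^ log OmegaO ξ)
  else if Order.IsSuccLimit (ξ / OmegaO ^ log OmegaO ξ) then ξ / OmegaO ^ log OmegaO ξ
  else if log OmegaO ξ = 0 then 1
  else if hlog : Order.IsSuccLimit (log OmegaO ξ) then
    (if hll : log OmegaO ξ < ξ then tau (log OmegaO ξ) else 0)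
  else OmegaO
termination_by ξ
decreasing_by
  · exact mod_opow_log_lt_self _ h0
  · exact hll

/-- The collapsing function `Θ_X`. -/
def ThetaF (X : Set Ordinal) (ξ : Ordinal) : Ordinal :=
  sInf {θ | θ ∈ X ∧ star ξ < θ ∧ ∀ ζ, ζ < ξ → star ζ < θ → ThetaF X ζ < θ}
termination_by ξ
decreasing_by exact by assumption

/-- `Ω_n`: the tower `Ω_0 = 1`, `Ω_{n+1} = Ω ^ Ω_n`. -/
def OmegaTow : ℕ → Ordinal
  | 0 => 1
  | n + 1 => OmegaO ^ OmegaTow n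

/-- `Θ_X(ε_{Ω+1}) = sup_n Θ_X(Ω_n)`. -/
def ThetaEps (X : Set Ordinal) : Ordinal := ⨆ n : ℕ, ThetaF X (OmegaTow n)

/-- `ε̂_{Ω+1}`. -/
def hatEps (X : Set Ordinal) : Set Ordinal :=
  {ξ | ξ < epsOmega ∧ star ξ < ThetaEps X}

/-- `X` is a club in `Ω`. -/
def IsClubBelowOmega (X : Set Ordinal) : Prop :=
  (∀ x ∈ X, x < OmegaO) ∧
  (∀ a, a < OmegaO → ∃ x ∈ X, a < x) ∧
  (∀ S : Set Ordinal, S ⊆ X → S.Nonempty → sSup S < OmegaO → sSup S ∈ X)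

/-- The set of limit points of `X` (below `Ω`). -/
def limitPtsOf (X : Set Ordinal) : Set Ordinal :=
  {x | 0 < x ∧ ∀ y, y < x → ∃ z ∈ X, y < z ∧ z < x}

/-- `FIX(X)`. -/
def FIXs (X : Set Ordinal) : Set Ordinal :=
  {ξ | ξ < epsOmega ∧ star (fs ξ 1) < star ξ ∧ star ξ = tau ξ ∧
    ∃ γ, ξ < γ ∧ γ < epsOmega ∧ star ξ = ThetaF X γ}

/-- `JUMP(X)`. -/
def JUMPs (X : Set Ordinal) : Set Ordinal :=
  {0} ∪ {ξ | ∃ ζ, ξ = ζ + 1} ∪ FIXs X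

/-- `Θ*`. -/
def ThetaStarF (X : Set Ordinal) (ξ : Ordinal) : Ordinal :=
  if ∃ ζ, ξ = ζ + 1 then ThetaF X (Ordinal.pred ξ)
  else if ξ ∈ FIXs X then tau ξ
  else 0

/-- `ξ̌`. -/
def checkF (X : Set Ordinal) (ξ : Ordinal) : Ordinal :=
  if 0 < ThetaStarF X ξ then OmegaO * (ξ / OmegaO) else ξ

/-- `ℙ`, the club of countable additively indecomposable ordinals. -/
def PP : Set Ordinal := {x | x < OmegaO ∧ ∃ a, x = Ordinal.omega0 ^ a}

/-- `1 + Ord`, the club of nonzero countable ordinals. -/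
def oneOrdS : Set Ordinal := {x | 0 < x ∧ x < OmegaO}

/-- `Θ^{(i)}(ξ)`. -/
def ThetaIter (X : Set Ordinal) (ξ : Ordinal) : ℕ → Ordinal
  | 0 => ThetaStarF X ξ
  | n + 1 => ThetaF X (fs (checkF X ξ) (ThetaIter X ξ n))

/-- A Buchholz system of fundamental sequences for `Θ_X`. -/
def IsBuchholz (X : Set Ordinal) (B : Ordinal → ℕ → Ordinal) : Prop :=
  (∀ n, B 0 n = 0) ∧
  (∀ α ξ n, ξ ∈ hatEps X → OmegaO ≤ ξ → tau ξ < OmegaO → ξ = fs α (tau ξ) →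
    B ξ n = fs α (B (tau ξ) n)) ∧
  (∀ ξ n, ξ ∈ hatEps X → 0 < tau (checkF X ξ) → tau (checkF X ξ) < OmegaO →
    B (ThetaF X ξ) n = ThetaF X (B (checkF X ξ) n + ThetaStarF X ξ)) ∧
  (∀ ξ n, ξ ∈ hatEps X → tau (checkF X ξ) = OmegaO →
    B (ThetaF X ξ) n = ThetaIter X ξ n)

/-- The additional clause for the `σ = Θ_{1+Ord}` Buchholz system. -/
def SigmaExtra (B : Ordinal → ℕ → Ordinal) : Prop :=
  ∀ β n, β < OmegaO → B (ThetaF oneOrdS β) n = β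

/-- The additional clauses for the `ϑ = Θ_ℙ` Buchholz system. -/
def VarthetaExtra (B : Ordinal → ℕ → Ordinal) : Prop :=
  (∀ α β n, 0 < β → (∀ α' < α, α' + β < α + β) → B (α + β) n = α + B β n) ∧
  (∀ β n, β < OmegaO → β ∈ JUMPs PP → B (ThetaF PP β) n = ThetaStarF PP β * n)
lemma star_zero' : _root_.star 0 = 0 := by rw [_root_.star]; simp

lemma star_small {δ : Ordinal} (h0 : δ ≠ 0) (h : δ < OmegaO) : _root_.star δ = δ := by
  have hlog : log OmegaO δ = 0 := log_eq_zero h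
  rw [_root_.star, dif_neg h0, hlog]
  rw [dif_pos (pos_iff_ne_zero.2 h0)]
  simp [star_zero', Ordinal.mod_one]

lemma log_OmegaO_lt {ξ : Ordinal} (h0 : ξ ≠ 0) (he : ξ < epsOmega) : log OmegaO ξ < ξ := by
  by_contra hc
  push_neg at hc
  have h1 : OmegaO ^ ξ ≤ ξ :=
    le_trans (opow_le_opow_right OmegaO_pos hc) (opow_log_le_self _ h0)
  have h2 : Ordinal.omega0 ^ ξ ≤ OmegaO ^ ξ :=
    opow_le_opow_left ξ omega0_le_OmegaO
  have h3 : ξ ≤ Ordinal.omega0 ^ ξ := right_le_opow ξ Ordinal.one_lt_omega0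
  have hfix : Ordinal.omega0 ^ ξ = ξ := le_antisymm (le_trans h2 h1) h3
  have hΩle : OmegaO ≤ ξ := by
    calc OmegaO = OmegaO ^ (1 : Ordinal) := (opow_one _).symm
      _ ≤ OmegaO ^ ξ := opow_le_opow_right OmegaO_pos (Ordinal.one_le_iff_ne_zero.2 h0)
      _ ≤ ξ := h1
  have hΩlt : OmegaO < ξ := by
    rcases eq_or_lt_of_le hΩle with rfl | h
    · have : OmegaO ^ (1:Ordinal) < OmegaO ^ OmegaO :=
        (opow_lt_opow_iff_right one_lt_OmegaO).2 one_lt_OmegaO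
      rw [opow_one] at this
      exact absurd h1 (not_le.2 this)
    · exact h
  have : epsOmega ≤ ξ := by
    apply nfp_le_fp (isNormal_opow Ordinal.one_lt_omega0).monotone
    · exact Order.add_one_le_of_lt hΩlt
    · exact le_of_eq hfix
  exact absurd he (not_lt.2 this)

lemma decomp (u δ : Ordinal) (hu : u ≠ 0) (hδ : δ < OmegaO) :
    ∃ r < u, log OmegaO (OmegaO * u + δ) = log OmegaO (OmegaO * u) ∧
      (OmegaO * u + δ) / OmegaO ^ log OmegaO (OmegaO * u)
        = (OmegaO * u) / OmegaO ^ log OmegaO (OmegaO * u) ∧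
      (OmegaO * u + δ) % OmegaO ^ log OmegaO (OmegaO * u) = OmegaO * r + δ ∧
      (OmegaO * u) % OmegaO ^ log OmegaO (OmegaO * u) = OmegaO * r := by
  set a := log OmegaO (OmegaO * u) with ha
  have hΩ0 : OmegaO ≠ 0 := OmegaO_pos.ne'
  have hα0 : OmegaO * u ≠ 0 := _root_.mul_ne_zero hΩ0 hu
  have h1a : 1 ≤ a := by
    rw [ha, ← opow_le_iff_le_log one_lt_OmegaO hα0, opow_one]
    exact Ordinal.le_mul_left OmegaO (pos_iff_ne_zero.2 hu)
  obtain ⟨a1, ha1⟩ : ∃ a1, 1 + a1 = a := ⟨a - 1, Ordinal.add_sub_cancel_of_le h1a⟩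
  have hopow : OmegaO ^ a = OmegaO * OmegaO ^ a1 := by
    rw [← ha1, opow_add, opow_one]
  have hmodα : (OmegaO * u) % OmegaO ^ a = OmegaO * (u % OmegaO ^ a1) := by
    rw [hopow, Ordinal.mul_mod_mul]
  set r := u % OmegaO ^ a1 with hr
  have hrltu : r < u := by
    have h1 : OmegaO * r < OmegaO * u := by
      rw [← hmodα]
      exact lt_of_lt_of_le (Ordinal.mod_lt _ (opow_ne_zero a hΩ0)) (opow_log_le_self OmegaO hα0)
    exact (mul_lt_mul_iff_right₀ OmegaO_pos).1 h1
  have hrlt : r < OmegaO ^ a1 := Ordinal.mod_lt u (opow_ne_zero a1 hΩ0)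
  have hrsucc : OmegaO * r + δ < OmegaO ^ a := by
    calc OmegaO * r + δ < OmegaO * r + OmegaO := add_lt_add_right hδ _
      _ = OmegaO * (r + 1) := (mul_add_one _ _).symm
      _ ≤ OmegaO * OmegaO ^ a1 := mul_le_mul_right (Order.add_one_le_of_lt hrlt) _
      _ = OmegaO ^ a := hopow.symm
  set b := (OmegaO * u) / OmegaO ^ a with hb
  have hdam : OmegaO ^ a * b + OmegaO * r = OmegaO * u := by
    rw [hb, ← hmodα]; exact Ordinal.div_add_mod _ _
  have hξ : OmegaO * u + δ = OmegaO ^ a * b + (OmegaO * r + δ) := by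
    rw [← add_assoc, hdam]
  have hdiv : (OmegaO * u + δ) / OmegaO ^ a = b := by
    rw [hξ, Ordinal.mul_add_div _ (opow_ne_zero a hΩ0), Ordinal.div_eq_zero_of_lt hrsucc, add_zero]
  have hmodξ : (OmegaO * u + δ) % OmegaO ^ a = OmegaO * r + δ := by
    rw [hξ, Ordinal.mul_add_mod_self, Ordinal.mod_eq_of_lt hrsucc]
  have hξ0 : OmegaO * u + δ ≠ 0 := by
    intro h
    exact hα0 (le_antisymm (h ▸ le_self_add) bot_le)
  have hlogξ : log OmegaO (OmegaO * u + δ) = a := by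
    apply le_antisymm
    · rw [← Order.lt_succ_iff, ← lt_opow_iff_log_lt one_lt_OmegaO hξ0]
      have hbΩ : b < OmegaO := by
        rw [hb, Ordinal.div_lt (opow_ne_zero a hΩ0), ← opow_succ]
        exact lt_opow_succ_log_self one_lt_OmegaO _
      calc OmegaO * u + δ = OmegaO ^ a * b + (OmegaO * r + δ) := hξ
        _ < OmegaO ^ a * b + OmegaO ^ a := add_lt_add_right hrsucc _
        _ = OmegaO ^ a * (b + 1) := (mul_add_one _ _).symm
        _ ≤ OmegaO ^ a * OmegaO := mul_le_mul_right (Order.add_one_le_of_lt hbΩ) _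
        _ = OmegaO ^ Order.succ a := (opow_succ _ _).symm
    · rw [← opow_le_iff_le_log one_lt_OmegaO hξ0]
      exact le_trans (opow_log_le_self _ hα0) (le_self_add)
  exact ⟨r, hrltu, hlogξ, hdiv, hmodξ, hmodα⟩
lemma star_mul_add : ∀ u δ : Ordinal, δ < OmegaO → δ ≠ 0 → OmegaO * u + δ < epsOmega →
    _root_.star (OmegaO * u + δ) = max (_root_.star (OmegaO * u)) δ := by
  intro u
  induction u using Ordinal.induction with
  | h u IH =>
  intro δ hδΩ hδ0 heps
  rcases eq_or_ne u 0 with rfl | hu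
  · rw [mul_zero, zero_add, star_small hδ0 hδΩ, star_zero']
    exact (max_eq_right (bot_le (a := δ))).symm
  obtain ⟨r, hr, hlog, hdiv, hmodξ, hmodα⟩ := decomp u δ hu hδΩ
  have hα0 : OmegaO * u ≠ 0 := _root_.mul_ne_zero OmegaO_pos.ne' hu
  have hξ0 : OmegaO * u + δ ≠ 0 := by
    intro h
    exact hα0 (le_antisymm (h ▸ le_self_add) bot_le)
  have hαeps : OmegaO * u < epsOmega := lt_of_le_of_lt (le_self_add) heps
  have hlξ : log OmegaO (OmegaO * u + δ) < OmegaO * u + δ := log_OmegaO_lt hξ0 heps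
  have hlα : log OmegaO (OmegaO * u) < OmegaO * u := log_OmegaO_lt hα0 hαeps
  have hmeps : OmegaO * r + δ < epsOmega := by
    calc OmegaO * r + δ = (OmegaO * u + δ) % OmegaO ^ log OmegaO (OmegaO * u) := hmodξ.symm
      _ ≤ OmegaO * u + δ := Ordinal.mod_le _ _
      _ < epsOmega := heps
  have hIH : _root_.star (OmegaO * r + δ) = max (_root_.star (OmegaO * r)) δ :=
    IH r hr δ hδΩ hδ0 hmeps
  rw [_root_.star, dif_neg hξ0, dif_pos hlξ, hlog, hdiv, hmodξ, hIH]
  conv_rhs => rw [_root_.star, dif_neg hα0, dif_pos hlα, hmodα]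
  ac_rfl

lemma fs_mul_add_limit : ∀ u β : Ordinal, Order.IsSuccLimit β → β < OmegaO → OmegaO * u + β < epsOmega →
    fs (OmegaO * u + β) 1 = OmegaO * u + 1 := by
  intro u
  induction u using Ordinal.induction with
  | h u IH =>
  intro β hβ hβΩ heps
  rcases eq_or_ne u 0 with rfl | hu
  · rw [mul_zero, zero_add]
    have h1 : ¬ β ≤ 1 := not_le.2 (Ordinal.one_lt_of_isSuccLimit hβ)
    have hlog : log OmegaO β = 0 := log_eq_zero hβΩ
    rw [fs, dif_neg h1, hlog]
    simp [Ordinal.mod_one, hβ]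
  · obtain ⟨r, hr, hlog, hdiv, hmodξ, hmodα⟩ := decomp u β hu hβΩ
    have hα0 : OmegaO * u ≠ 0 := _root_.mul_ne_zero OmegaO_pos.ne' hu
    have h1 : ¬ (OmegaO * u + β ≤ 1) := by
      apply not_le.2
      calc (1 : Ordinal) < β := Ordinal.one_lt_of_isSuccLimit hβ
        _ ≤ OmegaO * u + β := le_add_self
    have hmodne : (OmegaO * u + β) % OmegaO ^ log OmegaO (OmegaO * u + β) ≠ 0 := by
      rw [hlog, hmodξ]
      intro h
      exact hβ.pos.ne' (le_antisymm (h ▸ le_add_self) bot_le)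
    have hmeps : OmegaO * r + β < epsOmega := by
      calc OmegaO * r + β = (OmegaO * u + β) % OmegaO ^ log OmegaO (OmegaO * u) := hmodξ.symm
        _ ≤ OmegaO * u + β := Ordinal.mod_le _ _
        _ < epsOmega := heps
    rw [fs, dif_neg h1, dif_pos hmodne, hlog, hdiv, hmodξ, IH r hr β hβ hβΩ hmeps,
      ← add_assoc]
    congr 1
    calc OmegaO ^ log OmegaO (OmegaO * u) * (OmegaO * u / OmegaO ^ log OmegaO (OmegaO * u))
          + OmegaO * r
        = OmegaO ^ log OmegaO (OmegaO * u) * (OmegaO * u / OmegaO ^ log OmegaO (OmegaO * u))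
          + OmegaO * u % OmegaO ^ log OmegaO (OmegaO * u) := by rw [hmodα]
      _ = OmegaO * u := Ordinal.div_add_mod _ _

lemma ThetaF_spec (X : Set Ordinal) (γ : Ordinal) (h : 0 < ThetaF X γ) :
    _root_.star γ < ThetaF X γ ∧
      ∀ ζ, ζ < γ → _root_.star ζ < ThetaF X γ → ThetaF X ζ < ThetaF X γ := by
  set S := {θ | θ ∈ X ∧ _root_.star γ < θ ∧
    ∀ ζ, ζ < γ → _root_.star ζ < θ → ThetaF X ζ < θ} with hS
  have hu : ThetaF X γ = sInf S := by rw [ThetaF]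
  have hne : S.Nonempty := by
    by_contra hn
    rw [Set.not_nonempty_iff_eq_empty] at hn
    rw [hu, hn, Ordinal.sInf_empty] at h
    exact absurd h (lt_irrefl _)
  have hm := csInf_mem hne
  rw [← hu] at hm
  exact ⟨hm.2.1, hm.2.2⟩
/-- If `Θ*(α+β) > 0` then `Θ_X(α+β') ≤ Θ*(α+β)` for `β' < β`. -/
theorem stmt9 (X : Set Ordinal) (hX : IsClubBelowOmega X) (h0X : 0 ∉ X)
    (αt α β β' : Ordinal) (hα : α = OmegaO * αt) (hβ : β < OmegaO)
    (hdom : α + β < epsOmega) (hβ' : β' < β) (hpos : 0 < ThetaStarF X (α + β)) :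
    ThetaF X (α + β') ≤ ThetaStarF X (α + β) := by
  subst hα
  have hβ'Ω : β' < OmegaO := lt_trans hβ' hβ
  have hβ'eps : OmegaO * αt + β' < epsOmega := lt_trans (add_lt_add_right hβ' _) hdom
  have hstar_le : ∀ δ : Ordinal, δ < OmegaO → OmegaO * αt + δ < epsOmega →
      _root_.star (OmegaO * αt + δ) ≤ max (_root_.star (OmegaO * αt)) δ := by
    intro δ hδ hδe
    rcases eq_or_ne δ 0 with rfl | hδ0
    · rw [add_zero]; exact le_max_left _ _
    · rw [star_mul_add αt δ hδ hδ0 hδe]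
  rw [ThetaStarF] at hpos ⊢
  by_cases hsucc : ∃ ζ, OmegaO * αt + β = ζ + 1
  · rw [if_pos hsucc] at hpos ⊢
    rcases Ordinal.zero_or_succ_or_isSuccLimit β with h0 | ⟨β₀, hβ₀⟩ | hlim
    · exact absurd hβ' (by simp [h0])
    · subst hβ₀
      rw [Ordinal.add_succ, Ordinal.pred_succ] at hpos ⊢
      rw [Order.lt_succ_iff] at hβ'
      rcases eq_or_lt_of_le hβ' with rfl | hlt
      · exact le_rfl
      obtain ⟨hstar, hcl⟩ := ThetaF_spec X _ hpos
      apply le_of_lt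
      apply hcl _ (add_lt_add_right hlt _)
      have hβ₀0 : β₀ ≠ 0 := fun h => absurd hlt (by simp [h])
      have hβ₀Ω : β₀ < OmegaO := lt_trans (Order.lt_succ β₀) hβ
      have heps₀ : OmegaO * αt + β₀ < epsOmega :=
        lt_trans (add_lt_add_right (Order.lt_succ β₀) _) hdom
      calc _root_.star (OmegaO * αt + β') ≤ max (_root_.star (OmegaO * αt)) β' :=
            hstar_le β' hβ'Ω hβ'eps
        _ ≤ max (_root_.star (OmegaO * αt)) β₀ := max_le_max le_rfl hlt.le
        _ = _root_.star (OmegaO * αt + β₀) := (star_mul_add αt β₀ hβ₀Ω hβ₀0 heps₀).symm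
        _ < ThetaF X (OmegaO * αt + β₀) := hstar
    · exfalso
      obtain ⟨ζ, hζ⟩ := hsucc
      have hL : Order.IsSuccLimit (OmegaO * αt + β) := Ordinal.isSuccLimit_add _ hlim
      rw [Ordinal.add_one_eq_succ] at hζ
      have hζlt : ζ < OmegaO * αt + β := hζ ▸ Order.lt_succ ζ
      exact absurd (hζ ▸ hL.succ_lt hζlt) (lt_irrefl _)
  · rw [if_neg hsucc] at hpos ⊢
    by_cases hfix : OmegaO * αt + β ∈ FIXs X
    · rw [if_pos hfix] at hpos ⊢
      obtain ⟨heps', hfs, htau, γ, hγ1, hγ2, hγ3⟩ := hfix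
      rcases Ordinal.zero_or_succ_or_isSuccLimit β with h0 | ⟨β₀, hβ₀⟩ | hlim
      · exact absurd hβ' (by simp [h0])
      · exact absurd ⟨OmegaO * αt + β₀,
          by rw [← hβ₀, Ordinal.add_succ, Ordinal.add_one_eq_succ]⟩ hsucc
      · have hβ0 : β ≠ 0 := hlim.pos.ne'
        have hstarξ : _root_.star (OmegaO * αt + β) = max (_root_.star (OmegaO * αt)) β :=
          star_mul_add αt β hβ hβ0 hdom
        have hfs1 : fs (OmegaO * αt + β) 1 = OmegaO * αt + 1 :=
          fs_mul_add_limit αt β hlim hβ hdom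
        rw [hfs1] at hfs
        have h1eps : OmegaO * αt + 1 < epsOmega :=
          lt_of_le_of_lt (add_le_add_right (Ordinal.one_lt_of_isSuccLimit hlim).le _) hdom
        have hs1 : _root_.star (OmegaO * αt + 1) = max (_root_.star (OmegaO * αt)) 1 :=
          star_mul_add αt 1 one_lt_OmegaO one_ne_zero h1eps
        rw [← htau] at hpos ⊢
        rw [hγ3] at hpos hfs hstarξ ⊢
        obtain ⟨hstarγ, hcl⟩ := ThetaF_spec X γ hpos
        apply le_of_lt
        apply hcl _ (lt_trans (add_lt_add_right hβ' _) hγ1)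
        have hβ'lt : β' < ThetaF X γ :=
          lt_of_lt_of_le hβ' (hstarξ ▸ le_max_right (_root_.star (OmegaO * αt)) β)
        have hAlt : _root_.star (OmegaO * αt) < ThetaF X γ :=
          lt_of_le_of_lt (hs1 ▸ le_max_left (_root_.star (OmegaO * αt)) 1) hfs
        exact lt_of_le_of_lt (hstar_le β' hβ'Ω hβ'eps) (max_lt hAlt hβ'lt)
    · rw [if_neg hfix] at hpos
      exact absurd hpos (lt_irrefl 0)

end
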